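/- Let G be a brace with colour classes A and B and let X ⊆ V(G) satisfy mp(∂(X)) = 2 and 4 ≤ |X| ≤ |V(G)| − 4. Then the balance of X equals 2, i.e. ||X ∩ A| − |X ∩ B|| = 2. -/

import Mathlib

open SimpleGraph

/-- A graph is matching covered if it is connected and every edge lies in a
perfect matching. -/
def MatchingCovered {V : Type*} (G : SimpleGraph V) : Prop :=
  G.Connected ∧ ∀ e ∈ G.edgeSet, ∃ M : G.Subgraph, M.IsPerfectMatching ∧ e ∈ M.edgeSet

/-- The edge cut `∂(X)`: all edges of `G` with exactly one endpoint in `X`. -/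
def cutEdges {V : Type*} (G : SimpleGraph V) (X : Set V) : Set (Sym2 V) :=
  {e | e ∈ G.edgeSet ∧ ∃ u v, e = s(u, v) ∧ u ∈ X ∧ v ∉ X}

/-- The matching porosity of the cut `∂(X)`: the maximum number of edges of a
perfect matching of `G` crossing the cut. -/
noncomputable def matchingPorosity {V : Type*} (G : SimpleGraph V) (X : Set V) : ℕ :=
  sSup {n | ∃ M : G.Subgraph, M.IsPerfectMatching ∧ n = (M.edgeSet ∩ cutEdges G X).ncard}

/-- A cut is tight if every perfect matching contains exactly one of its edges. -/
def IsTightCut {V : Type*} (G : SimpleGraph V) (X : Set V) : Prop :=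
  ∀ M : G.Subgraph, M.IsPerfectMatching → (M.edgeSet ∩ cutEdges G X).ncard = 1

/-- A tight cut is non-trivial if both shores have at least two vertices. -/
def IsNontrivialTightCut {V : Type*} (G : SimpleGraph V) (X : Set V) : Prop :=
  IsTightCut G X ∧ 2 ≤ X.ncard ∧ 2 ≤ Xᶜ.ncard

/-- `A`, `B` form a bipartition of `G` into its two colour classes. -/
def IsBipartitionOf {V : Type*} (G : SimpleGraph V) (A B : Set V) : Prop :=
  A ∪ B = Set.univ ∧ Disjoint A B ∧
    ∀ ⦃u v⦄, G.Adj u v → (u ∈ A ∧ v ∈ B) ∨ (u ∈ B ∧ v ∈ A)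

/-- A brace with colour classes `A` and `B`: a bipartite matching covered graph
without non-trivial tight cuts. -/
def IsBraceWith {V : Type*} (G : SimpleGraph V) (A B : Set V) : Prop :=
  MatchingCovered G ∧ IsBipartitionOf G A B ∧ ∀ X : Set V, ¬ IsNontrivialTightCut G X

section Helpers

variable {V : Type*} {G : SimpleGraph V}

/-- Partner function of a perfect matching. -/
lemma pm_exists_partner {M : G.Subgraph} (hM : M.IsPerfectMatching) :
    ∃ f : V → V, (∀ v, M.Adj v (f v)) ∧ ∀ v w, M.Adj v w → w = f v := by
  have h : ∀ v : V, ∃ w, M.Adj v w ∧ ∀ y, M.Adj v y → y = w := fun v => hM.1 (hM.2 v)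
  choose f h1 h2 using h
  exact ⟨f, h1, h2⟩

lemma partner_invol {M : G.Subgraph} {f : V → V}
    (hf1 : ∀ v, M.Adj v (f v)) (hf2 : ∀ v w, M.Adj v w → w = f v) (v : V) :
    f (f v) = v :=
  (hf2 (f v) v (hf1 v).symm).symm

/-- Crossing edges of a PM are counted by vertices in `X` matched outside. -/
lemma crossing_card (X : Set V) {M : G.Subgraph}
    {f : V → V} (hf1 : ∀ v, M.Adj v (f v)) (hf2 : ∀ v w, M.Adj v w → w = f v) :
    (M.edgeSet ∩ cutEdges G X).ncard = {v | v ∈ X ∧ f v ∉ X}.ncard := by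
  have hbij : Set.BijOn (fun v => s(v, f v)) {v | v ∈ X ∧ f v ∉ X}
      (M.edgeSet ∩ cutEdges G X) := by
    refine ⟨?_, ?_, ?_⟩
    · rintro v ⟨hv, hfv⟩
      exact ⟨Subgraph.mem_edgeSet.2 (hf1 v),
        ⟨M.adj_sub (hf1 v), v, f v, rfl, hv, hfv⟩⟩
    · rintro u ⟨hu, hfu⟩ v ⟨hv, hfv⟩ h
      simp only [Sym2.eq, Sym2.rel_iff', Prod.mk.injEq, Prod.swap_prod_mk] at h
      rcases h with ⟨h1, _⟩ | ⟨h1, h2⟩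
      · exact h1
      · exact absurd (show f v ∈ X from h1 ▸ hu) hfv
    · rintro e ⟨heM, _, u, v, rfl, hu, hv⟩
      have hadj : M.Adj u v := Subgraph.mem_edgeSet.1 heM
      have hv' : v = f u := hf2 u v hadj
      exact ⟨u, ⟨hu, hv' ▸ hv⟩, by subst hv'; rfl⟩
  rw [← hbij.image_eq, Set.ncard_image_of_injOn hbij.injOn]


/-- A walk from inside `S` to outside `S` crosses the boundary. -/
lemma walk_exists_boundary {S : Set V} :
    ∀ {x y : V}, G.Walk x y → x ∈ S → y ∉ S → ∃ u v, G.Adj u v ∧ u ∈ S ∧ v ∉ S := by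
  intro x y w
  induction w with
  | nil => intro hx hy; exact absurd hx hy
  | @cons a b c h p ih =>
    intro hx hy
    by_cases hb : b ∈ S
    · exact ih hb hy
    · exact ⟨a, b, h, hx, hb⟩

lemma connected_exists_boundary (hconn : G.Connected) {S : Set V}
    (hne : S.Nonempty) (hproper : S ≠ Set.univ) :
    ∃ u v, G.Adj u v ∧ u ∈ S ∧ v ∉ S := by
  obtain ⟨x, hx⟩ := hne
  obtain ⟨y, hy⟩ : ∃ y, y ∉ S := by
    by_contra h
    push_neg at h
    exact hproper (Set.eq_univ_of_forall h)
  exact walk_exists_boundary (hconn x y).some hx hy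

/-- The two colour classes of a graph admitting a perfect matching are equinumerous. -/
lemma colour_ncard_eq [Finite V] {A B : Set V} (hbip : IsBipartitionOf G A B)
    {M : G.Subgraph} (hM : M.IsPerfectMatching) : A.ncard = B.ncard := by
  obtain ⟨f, hf1, hf2⟩ := pm_exists_partner hM
  obtain ⟨hun, hdis, hadj⟩ := hbip
  have hAB : ∀ v ∈ A, f v ∈ B := by
    intro v hv
    rcases hadj (M.adj_sub (hf1 v)) with ⟨_, h2⟩ | ⟨h1, _⟩
    · exact h2
    · exact absurd hv (Set.disjoint_right.1 hdis h1)
  have hBA : ∀ v ∈ B, f v ∈ A := by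
    intro v hv
    rcases hadj (M.adj_sub (hf1 v)) with ⟨h1, _⟩ | ⟨_, h2⟩
    · exact absurd hv (Set.disjoint_left.1 hdis h1)
    · exact h2
  have hbij : Set.BijOn f A B := by
    refine ⟨hAB, ?_, ?_⟩
    · intro u _ v _ h
      have := partner_invol hf1 hf2 u
      rw [h, partner_invol hf1 hf2 v] at this
      exact this.symm
    · intro b hb
      exact ⟨f b, hBA b hb, partner_invol hf1 hf2 b⟩
  rw [← hbij.image_eq, Set.ncard_image_of_injOn hbij.injOn]

/-- The key counting package for a perfect matching and a shore `X`. -/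
lemma key_counts [Finite V] {A B : Set V} (hbip : IsBipartitionOf G A B)
    {M : G.Subgraph} (hM : M.IsPerfectMatching) (X : Set V) :
    ∃ OA OB : Set V,
      (M.edgeSet ∩ cutEdges G X).ncard = OA.ncard + OB.ncard ∧
      ((X ∩ A).ncard : ℤ) - ((X ∩ B).ncard : ℤ) = (OA.ncard : ℤ) - (OB.ncard : ℤ) ∧
      (∀ u v, u ∈ X ∩ A → v ∉ X → M.Adj u v → u ∈ OA) := by
  obtain ⟨f, hf1, hf2⟩ := pm_exists_partner hM
  obtain ⟨hun, hdis, hadj⟩ := hbip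
  have hAB : ∀ v ∈ A, f v ∈ B := by
    intro v hv
    rcases hadj (M.adj_sub (hf1 v)) with ⟨_, h2⟩ | ⟨h1, _⟩
    · exact h2
    · exact absurd hv (Set.disjoint_right.1 hdis h1)
  have hBA : ∀ v ∈ B, f v ∈ A := by
    intro v hv
    rcases hadj (M.adj_sub (hf1 v)) with ⟨h1, _⟩ | ⟨_, h2⟩
    · exact absurd hv (Set.disjoint_left.1 hdis h1)
    · exact h2
  set IA := {v | v ∈ X ∩ A ∧ f v ∈ X} with hIA
  set OA := {v | v ∈ X ∩ A ∧ f v ∉ X} with hOA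
  set IB := {v | v ∈ X ∩ B ∧ f v ∈ X} with hIB
  set OB := {v | v ∈ X ∩ B ∧ f v ∉ X} with hOB
  refine ⟨OA, OB, ?_, ?_, ?_⟩
  · -- crossing count
    rw [crossing_card X hf1 hf2]
    have hsplit : {v | v ∈ X ∧ f v ∉ X} = OA ∪ OB := by
      ext v
      constructor
      · rintro ⟨hv, hfv⟩
        rcases (Set.eq_univ_iff_forall.1 hun v : v ∈ A ∪ B) with h | h
        · exact Or.inl ⟨⟨hv, h⟩, hfv⟩
        · exact Or.inr ⟨⟨hv, h⟩, hfv⟩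
      · rintro (⟨⟨hv, _⟩, hfv⟩ | ⟨⟨hv, _⟩, hfv⟩) <;> exact ⟨hv, hfv⟩
    have hd : Disjoint OA OB := by
      rw [Set.disjoint_left]
      rintro v ⟨⟨_, hvA⟩, _⟩ ⟨⟨_, hvB⟩, _⟩
      exact Set.disjoint_left.1 hdis hvA hvB
    rw [hsplit, Set.ncard_union_eq hd]
  · -- balance identity
    have hA : (X ∩ A).ncard = IA.ncard + OA.ncard := by
      have : X ∩ A = IA ∪ OA := by
        ext v
        constructor
        · intro hv
          by_cases h : f v ∈ X
          · exact Or.inl ⟨hv, h⟩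
          · exact Or.inr ⟨hv, h⟩
        · rintro (⟨hv, _⟩ | ⟨hv, _⟩) <;> exact hv
      have hd : Disjoint IA OA := by
        rw [Set.disjoint_left]
        rintro v ⟨_, h1⟩ ⟨_, h2⟩
        exact h2 h1
      rw [this, Set.ncard_union_eq hd]
    have hB : (X ∩ B).ncard = IB.ncard + OB.ncard := by
      have : X ∩ B = IB ∪ OB := by
        ext v
        constructor
        · intro hv
          by_cases h : f v ∈ X
          · exact Or.inl ⟨hv, h⟩
          · exact Or.inr ⟨hv, h⟩
        · rintro (⟨hv, _⟩ | ⟨hv, _⟩) <;> exact hv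
      have hd : Disjoint IB OB := by
        rw [Set.disjoint_left]
        rintro v ⟨_, h1⟩ ⟨_, h2⟩
        exact h2 h1
      rw [this, Set.ncard_union_eq hd]
    have hIAB : IA.ncard = IB.ncard := by
      have hbij : Set.BijOn f IA IB := by
        refine ⟨?_, ?_, ?_⟩
        · rintro v ⟨⟨hvX, hvA⟩, hfv⟩
          exact ⟨⟨hfv, hAB v hvA⟩, (partner_invol hf1 hf2 v).symm ▸ hvX⟩
        · intro u _ v _ h
          have := partner_invol hf1 hf2 u
          rw [h, partner_invol hf1 hf2 v] at this
          exact this.symm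
        · rintro b ⟨⟨hbX, hbB⟩, hfb⟩
          refine ⟨f b, ⟨⟨hfb, hBA b hbB⟩, (partner_invol hf1 hf2 b).symm ▸ hbX⟩,
            partner_invol hf1 hf2 b⟩
      rw [← hbij.image_eq, Set.ncard_image_of_injOn hbij.injOn]
    rw [hA, hB, hIAB]
    push_cast
    ring
  · -- membership
    intro u v huXA hvX hMuv
    exact ⟨huXA, (hf2 u v hMuv) ▸ hvX⟩


lemma brace_symm {A B : Set V} (h : IsBraceWith G A B) : IsBraceWith G B A := by
  obtain ⟨hmc, ⟨hun, hdis, hadj⟩, hnt⟩ := h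
  exact ⟨hmc, ⟨by rw [Set.union_comm]; exact hun, hdis.symm,
    fun u v huv => (hadj huv).symm⟩, hnt⟩

/-- Expansion in a brace: any nonempty `S ⊆ A` with `|S| ≤ |A| - 2` has
`|N(S)| ≥ |S| + 2`. -/
lemma brace_expansion [Finite V] {A B : Set V} (hBrace : IsBraceWith G A B) {S : Set V}
    (hSA : S ⊆ A) (hS : S.Nonempty) (hScard : S.ncard + 2 ≤ A.ncard) :
    S.ncard + 2 ≤ {v | ∃ a ∈ S, G.Adj a v}.ncard := by
  set N := {v | ∃ a ∈ S, G.Adj a v} with hN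
  obtain ⟨⟨hconn, hmc⟩, ⟨hun, hdis, hadj⟩, hnt⟩ := hBrace
  have hNB : N ⊆ B := by
    rintro v ⟨a, ha, hav⟩
    rcases hadj hav with ⟨_, h2⟩ | ⟨h1, _⟩
    · exact h2
    · exact absurd (hSA ha) (Set.disjoint_right.1 hdis h1)
  -- For any perfect matching with partner `f`, `f` maps `S` injectively into `N`.
  have hpartner : ∀ (M : G.Subgraph), M.IsPerfectMatching →
      ∃ f : V → V, (∀ v, M.Adj v (f v)) ∧ (∀ v w, M.Adj v w → w = f v) ∧
        Set.InjOn f S ∧ f '' S ⊆ N := by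
    intro M hM
    obtain ⟨f, hf1, hf2⟩ := pm_exists_partner hM
    refine ⟨f, hf1, hf2, ?_, ?_⟩
    · intro u _ v _ h
      have := partner_invol hf1 hf2 u
      rw [h, partner_invol hf1 hf2 v] at this
      exact this.symm
    · rintro v ⟨a, ha, rfl⟩
      exact ⟨a, ha, M.adj_sub (hf1 a)⟩
  -- a perfect matching exists
  obtain ⟨a0, ha0⟩ := hS
  have hV2 : ∃ x y : V, x ≠ y := by
    obtain ⟨a', ha'A, ha'S⟩ : ∃ a', a' ∈ A ∧ a' ∉ S := by
      by_contra h
      push_neg at h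
      have : A ⊆ S := fun a ha => h a ha
      have := Set.ncard_le_ncard this (Set.toFinite _)
      omega
    exact ⟨a0, a', fun h => ha'S (h ▸ ha0)⟩
  have hedge : ∃ u v, G.Adj u v := by
    obtain ⟨x, y, hxy⟩ := hV2
    obtain ⟨u, v, huv, _, _⟩ := connected_exists_boundary hconn ⟨x, Set.mem_singleton x⟩
      (fun h => hxy (by rw [Set.eq_univ_iff_forall] at h; exact ((h y).symm ▸ rfl)))
    exact ⟨u, v, huv⟩
  obtain ⟨u0, v0, huv0⟩ := hedge
  obtain ⟨M0, hM0, _⟩ := hmc s(u0, v0) huv0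
  -- |S| ≤ |N|
  obtain ⟨f0, hf01, hf02, hinj0, him0⟩ := hpartner M0 hM0
  have hSleN : S.ncard ≤ N.ncard := by
    rw [← Set.ncard_image_of_injOn hinj0]
    exact Set.ncard_le_ncard him0 (Set.toFinite _)
  by_contra hcon
  push_neg at hcon
  -- so |N| = |S| or |N| = |S| + 1
  set X₀ := S ∪ N with hX₀
  have hdisSN : Disjoint S N :=
    Set.disjoint_of_subset hSA hNB hdis
  have hX₀card : X₀.ncard = S.ncard + N.ncard := Set.ncard_union_eq hdisSN
  -- crossing count of any PM over X₀ is |N| - |S|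
  have hcross : ∀ (M : G.Subgraph), M.IsPerfectMatching →
      (M.edgeSet ∩ cutEdges G X₀).ncard = N.ncard - S.ncard := by
    intro M hM
    obtain ⟨f, hf1, hf2, hinj, him⟩ := hpartner M hM
    rw [crossing_card X₀ hf1 hf2]
    have hset : {v | v ∈ X₀ ∧ f v ∉ X₀} = N \ (f '' S) := by
      ext v
      constructor
      · rintro ⟨hv, hfv⟩
        rcases hv with hvS | hvN
        · exact absurd (Or.inr (him ⟨v, hvS, rfl⟩)) hfv
        · refine ⟨hvN, ?_⟩
          rintro ⟨a, haS, rfl⟩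
          exact hfv (Or.inl (by rw [partner_invol hf1 hf2 a]; exact haS))
      · rintro ⟨hvN, hvfS⟩
        refine ⟨Or.inr hvN, ?_⟩
        rintro (hfS | hfN)
        · exact hvfS ⟨f v, hfS, partner_invol hf1 hf2 v⟩
        · -- f v ∈ N ⊆ B, but f v ∈ A since v ∈ B
          have hvB : v ∈ B := hNB hvN
          have hfvA : f v ∈ A := by
            rcases hadj (M.adj_sub (hf1 v)) with ⟨h1, _⟩ | ⟨_, h2⟩
            · exact absurd hvB (Set.disjoint_left.1 hdis h1)
            · exact h2
          exact Set.disjoint_left.1 hdis hfvA (hNB hfN)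
    rw [hset, Set.ncard_diff (by rintro v ⟨a, ha, rfl⟩; exact him ⟨a, ha, rfl⟩),
      Set.ncard_image_of_injOn hinj]
  have hproper : X₀ ≠ Set.univ := by
    obtain ⟨a', ha'A, ha'S⟩ : ∃ a', a' ∈ A ∧ a' ∉ S := by
      by_contra h
      push_neg at h
      have : A ⊆ S := fun a ha => h a ha
      have := Set.ncard_le_ncard this (Set.toFinite _)
      omega
    intro h
    have : a' ∈ X₀ := h ▸ Set.mem_univ a'
    rcases this with h1 | h1
    · exact ha'S h1
    · exact Set.disjoint_left.1 hdis ha'A (hNB h1)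
  have hNS : N.ncard = S.ncard ∨ N.ncard = S.ncard + 1 := by omega
  rcases hNS with hNS | hNS
  · -- zero crossing, contradict connectivity + matching covered
    obtain ⟨u, v, huv, huX, hvX⟩ := connected_exists_boundary hconn
      ⟨a0, Or.inl ha0⟩ hproper
    obtain ⟨M, hM, heM⟩ := hmc s(u, v) huv
    have h1 : s(u, v) ∈ M.edgeSet ∩ cutEdges G X₀ :=
      ⟨heM, huv, u, v, rfl, huX, hvX⟩
    have h2 := hcross M hM
    rw [hNS, Nat.sub_self] at h2
    rw [Set.ncard_eq_zero (Set.toFinite _)] at h2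
    exact absurd h1 (h2 ▸ Set.notMem_empty _)
  · -- tight cut, contradict brace
    refine hnt X₀ ⟨?_, ?_, ?_⟩
    · intro M hM
      rw [hcross M hM, hNS]
      omega
    · have : 0 < S.ncard := (Set.ncard_pos (Set.toFinite _)).2 ⟨a0, ha0⟩
      omega
    · have hsub : A \ S ⊆ X₀ᶜ := by
        rintro a ⟨haA, haS⟩ (h | h)
        · exact haS h
        · exact Set.disjoint_left.1 hdis haA (hNB h)
      have h1 : (A \ S).ncard = A.ncard - S.ncard :=
        Set.ncard_diff hSA
      have h2 := Set.ncard_le_ncard hsub (Set.toFinite _)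
      omega


/-- A brace is 2-extendable. -/
lemma two_extend [Finite V] {A B : Set V} (hBrace : IsBraceWith G A B) {a1 a2 b1 b2 : V}
    (ha1 : a1 ∈ A) (ha2 : a2 ∈ A) (hb1 : b1 ∈ B) (hb2 : b2 ∈ B)
    (hna : a1 ≠ a2) (hnb : b1 ≠ b2) (he1 : G.Adj a1 b1) (he2 : G.Adj a2 b2) :
    ∃ M : G.Subgraph, M.IsPerfectMatching ∧ M.Adj a1 b1 ∧ M.Adj a2 b2 := by
  classical
  letI : Fintype V := Fintype.ofFinite V
  obtain ⟨⟨hconn, hmc⟩, ⟨hun, hdis, hadj⟩, hnt⟩ := id hBrace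
  obtain ⟨M0, hM0, _⟩ := hmc s(a1, b1) he1
  have hABcard : A.ncard = B.ncard := colour_ncard_eq ⟨hun, hdis, hadj⟩ hM0
  have hA2 : 2 ≤ A.ncard := by
    have : ({a1, a2} : Set V) ⊆ A := by rintro x (rfl | rfl); exacts [ha1, ha2]
    have := Set.ncard_le_ncard this (Set.toFinite _)
    rw [Set.ncard_pair hna] at this
    exact this
  set t : A → Finset V := fun a =>
    if (a : V) = a1 then {b1} else if (a : V) = a2 then {b2}
    else (G.neighborFinset (a : V)).filter (fun b => b ≠ b1 ∧ b ≠ b2) with ht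
  have hall : ∀ s : Finset A, s.card ≤ (s.biUnion t).card := by
    intro s
    set Tf : Finset V := s.image Subtype.val with hTf
    have hTcard : Tf.card = s.card := Finset.card_image_of_injective s Subtype.val_injective
    set S' : Set V := (↑Tf : Set V) \ {a1, a2} with hS'
    have hS'A : S' ⊆ A := by
      rintro a ⟨haT, _⟩
      rw [Finset.mem_coe, hTf, Finset.mem_image] at haT
      obtain ⟨x, _, rfl⟩ := haT
      exact x.2
    have hS'card : S'.ncard + 2 ≤ A.ncard := by
      have hsub : S' ⊆ A \ {a1, a2} := fun a ha => ⟨hS'A ha, ha.2⟩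
      have hpairA : ({a1, a2} : Set V) ⊆ A := by rintro x (rfl | rfl); exacts [ha1, ha2]
      have h1 : (A \ ({a1, a2} : Set V)).ncard = A.ncard - 2 := by
        rw [Set.ncard_diff hpairA, Set.ncard_pair hna]
      have h2 := Set.ncard_le_ncard hsub (Set.toFinite _)
      omega
    set W : Set V := {v | ∃ a ∈ S', G.Adj a v} \ {b1, b2} with hW
    set U : Finset V := s.biUnion t with hU
    have hWU : W ⊆ (↑U : Set V) := by
      rintro v ⟨⟨a, ⟨haT, hanot⟩, hav⟩, hvb⟩
      rw [Finset.mem_coe, hTf, Finset.mem_image] at haT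
      obtain ⟨x, hxs, hxa⟩ := haT
      have hx1 : (x : V) ≠ a1 := by
        rw [hxa]; intro h; exact hanot (by rw [h]; exact Or.inl rfl)
      have hx2 : (x : V) ≠ a2 := by
        rw [hxa]; intro h; exact hanot (by rw [h]; exact Or.inr rfl)
      have hvb1 : v ≠ b1 := fun h => hvb (by rw [h]; exact Or.inl rfl)
      have hvb2 : v ≠ b2 := fun h => hvb (by rw [h]; exact Or.inr rfl)
      have : v ∈ t x := by
        rw [ht]
        simp only [hx1, hx2, if_false]
        rw [Finset.mem_filter, mem_neighborFinset, hxa]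
        exact ⟨hav, hvb1, hvb2⟩
      exact Finset.mem_coe.2 (Finset.mem_biUnion.2 ⟨x, hxs, this⟩)
    have hb1W : b1 ∉ W := fun h => h.2 (Or.inl rfl)
    have hb2W : b2 ∉ W := fun h => h.2 (Or.inr rfl)
    have hm1 : a1 ∈ Tf → b1 ∈ (↑U : Set V) := by
      intro h
      rw [hTf, Finset.mem_image] at h
      obtain ⟨x, hxs, hxa⟩ := h
      have : t x = {b1} := by simp [ht, hxa]
      exact Finset.mem_coe.2 (Finset.mem_biUnion.2 ⟨x, hxs, by rw [this]; exact Finset.mem_singleton_self b1⟩)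
    have hm2 : a2 ∈ Tf → b2 ∈ (↑U : Set V) := by
      intro h
      rw [hTf, Finset.mem_image] at h
      obtain ⟨x, hxs, hxa⟩ := h
      have hx1 : (x : V) ≠ a1 := by rw [hxa]; exact hna.symm
      have : t x = {b2} := by simp [ht, hx1, hxa]; exact fun h => absurd h.symm hna
      exact Finset.mem_coe.2 (Finset.mem_biUnion.2 ⟨x, hxs, by rw [this]; exact Finset.mem_singleton_self b2⟩)
    -- |S'| ≤ |W|
    have hWcard : S'.ncard ≤ W.ncard := by
      rcases Set.eq_empty_or_nonempty S' with h | h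
      · rw [h, Set.ncard_empty]; omega
      · have hexp := brace_expansion hBrace hS'A h hS'card
        have hsplit := Set.ncard_inter_add_ncard_diff_eq_ncard
          {v | ∃ a ∈ S', G.Adj a v} ({b1, b2} : Set V) (Set.toFinite _)
        have hcap : ({v | ∃ a ∈ S', G.Adj a v} ∩ {b1, b2}).ncard ≤ 2 := by
          have := Set.ncard_le_ncard
            (Set.inter_subset_right : {v | ∃ a ∈ S', G.Adj a v} ∩ {b1,b2} ⊆ {b1,b2})
            (Set.toFinite _)
          rw [Set.ncard_pair hnb] at this
          exact this
        rw [hW]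
        omega
    -- T decomposition
    have hTsub : (↑Tf : Set V) ⊆ S' ∪ {a1, a2} := by
      intro a ha
      by_cases h : a ∈ ({a1, a2} : Set V)
      · exact Or.inr h
      · exact Or.inl ⟨ha, h⟩
    have hUcard : U.card = (↑U : Set V).ncard := (Set.ncard_coe_finset U).symm
    have hTfcard : Tf.card = (↑Tf : Set V).ncard := (Set.ncard_coe_finset Tf).symm
    rw [← hTcard, hUcard, hTfcard]
    by_cases h1 : a1 ∈ Tf <;> by_cases h2 : a2 ∈ Tf
    · -- both
      have hsubU : W ∪ {b1, b2} ⊆ (↑U : Set V) := by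
        rintro v (hv | hv)
        · exact hWU hv
        · rcases hv with rfl | rfl
          exacts [hm1 h1, hm2 h2]
      have hdisj : Disjoint W ({b1, b2} : Set V) := by
        rw [Set.disjoint_right]
        rintro v (rfl | rfl) hv
        exacts [hb1W hv, hb2W hv]
      have e1 : (W ∪ ({b1, b2} : Set V)).ncard = W.ncard + 2 := by
        rw [Set.ncard_union_eq hdisj, Set.ncard_pair hnb]
      have e2 := Set.ncard_le_ncard hsubU (Set.toFinite _)
      have e3 := Set.ncard_le_ncard hTsub (Set.toFinite _)
      have e4 := Set.ncard_union_le S' ({a1, a2} : Set V)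
      rw [Set.ncard_pair hna] at e4
      omega
    · -- only a1
      have hsubU : W ∪ {b1} ⊆ (↑U : Set V) := by
        rintro v (hv | hv)
        · exact hWU hv
        · rcases hv with rfl
          exact hm1 h1
      have hdisj : Disjoint W ({b1} : Set V) := by
        rw [Set.disjoint_right]
        rintro v rfl hv
        exact hb1W hv
      have e1 : (W ∪ ({b1} : Set V)).ncard = W.ncard + 1 := by
        rw [Set.ncard_union_eq hdisj, Set.ncard_singleton]
      have e2 := Set.ncard_le_ncard hsubU (Set.toFinite _)
      have hTsub' : (↑Tf : Set V) ⊆ S' ∪ {a1} := by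
        intro a ha
        by_cases h : a ∈ ({a1, a2} : Set V)
        · rcases h with rfl | rfl
          · exact Or.inr rfl
          · exact absurd (Finset.mem_coe.1 ha) h2
        · exact Or.inl ⟨ha, h⟩
      have e3 := Set.ncard_le_ncard hTsub' (Set.toFinite _)
      have e4 := Set.ncard_union_le S' ({a1} : Set V)
      rw [Set.ncard_singleton] at e4
      omega
    · -- only a2
      have hsubU : W ∪ {b2} ⊆ (↑U : Set V) := by
        rintro v (hv | hv)
        · exact hWU hv
        · rcases hv with rfl
          exact hm2 h2
      have hdisj : Disjoint W ({b2} : Set V) := by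
        rw [Set.disjoint_right]
        rintro v rfl hv
        exact hb2W hv
      have e1 : (W ∪ ({b2} : Set V)).ncard = W.ncard + 1 := by
        rw [Set.ncard_union_eq hdisj, Set.ncard_singleton]
      have e2 := Set.ncard_le_ncard hsubU (Set.toFinite _)
      have hTsub' : (↑Tf : Set V) ⊆ S' ∪ {a2} := by
        intro a ha
        by_cases h : a ∈ ({a1, a2} : Set V)
        · rcases h with rfl | rfl
          · exact absurd (Finset.mem_coe.1 ha) h1
          · exact Or.inr rfl
        · exact Or.inl ⟨ha, h⟩
      have e3 := Set.ncard_le_ncard hTsub' (Set.toFinite _)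
      have e4 := Set.ncard_union_le S' ({a2} : Set V)
      rw [Set.ncard_singleton] at e4
      omega
    · -- neither
      have e2 := Set.ncard_le_ncard hWU (Set.toFinite _)
      have hTsub' : (↑Tf : Set V) ⊆ S' := by
        intro a ha
        refine ⟨ha, ?_⟩
        rintro (rfl | rfl)
        exacts [h1 (Finset.mem_coe.1 ha), h2 (Finset.mem_coe.1 ha)]
      have e3 := Set.ncard_le_ncard hTsub' (Set.toFinite _)
      omega
  obtain ⟨f, hfinj, hft⟩ := (Finset.all_card_le_biUnion_card_iff_existsInjective' t).1 hall
  have hfa1 : f ⟨a1, ha1⟩ = b1 := by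
    have := hft ⟨a1, ha1⟩
    rw [ht] at this
    simp only [if_pos rfl] at this
    exact Finset.mem_singleton.1 this
  have hfa2 : f ⟨a2, ha2⟩ = b2 := by
    have := hft ⟨a2, ha2⟩
    rw [ht] at this
    simp only [if_neg hna.symm, if_pos rfl] at this
    exact Finset.mem_singleton.1 this
  have hfadj : ∀ x : A, G.Adj (x : V) (f x) := by
    intro x
    have hx := hft x
    simp only [ht] at hx
    by_cases h1' : (x : V) = a1
    · rw [if_pos h1'] at hx
      rw [Finset.mem_singleton.1 hx, h1']
      exact he1
    · rw [if_neg h1'] at hx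
      by_cases h2' : (x : V) = a2
      · rw [if_pos h2'] at hx
        rw [Finset.mem_singleton.1 hx, h2']
        exact he2
      · rw [if_neg h2', Finset.mem_filter, mem_neighborFinset] at hx
        exact hx.1
  have hfB : ∀ x : A, f x ∈ B := by
    intro x
    rcases hadj (hfadj x) with ⟨_, h⟩ | ⟨h, _⟩
    · exact h
    · exact absurd x.2 (Set.disjoint_right.1 hdis h)
  have hrange : Set.range f = B := by
    apply Set.eq_of_subset_of_ncard_le
    · rintro b ⟨x, rfl⟩
      exact hfB x
    · have h1 : (Set.range f).ncard = A.ncard := by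
        rw [← Set.image_univ, Set.ncard_image_of_injOn hfinj.injOn, Set.ncard_univ,
          Nat.card_coe_set_eq]
      omega
    · exact Set.toFinite _
  refine ⟨{ verts := Set.univ,
            Adj := fun u v => (∃ h : u ∈ A, f ⟨u, h⟩ = v) ∨ (∃ h : v ∈ A, f ⟨v, h⟩ = u),
            adj_sub := ?_,
            edge_vert := fun _ => Set.mem_univ _,
            symm := ⟨fun u v h => h.symm⟩ }, ⟨?_, fun v => Set.mem_univ v⟩,
          Or.inl ⟨ha1, hfa1⟩, Or.inl ⟨ha2, hfa2⟩⟩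
  · rintro u v (⟨h, rfl⟩ | ⟨h, rfl⟩)
    · exact hfadj ⟨u, h⟩
    · exact (hfadj ⟨v, h⟩).symm
  · -- IsMatching
    rintro v -
    by_cases hv : v ∈ A
    · refine ⟨f ⟨v, hv⟩, Or.inl ⟨hv, rfl⟩, ?_⟩
      rintro w (⟨h, rfl⟩ | ⟨h, hw⟩)
      · rfl
      · exact absurd hv (Set.disjoint_right.1 hdis (hw ▸ hfB ⟨w, h⟩))
    · have hvB : v ∈ B := by
        rcases (Set.eq_univ_iff_forall.1 hun v : v ∈ A ∪ B) with h | h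
        · exact absurd h hv
        · exact h
      obtain ⟨x, hx⟩ : ∃ x : A, f x = v := by
        have : v ∈ Set.range f := hrange ▸ hvB
        exact this
      refine ⟨(x : V), Or.inr ⟨x.2, by rw [Subtype.eta]; exact hx⟩, ?_⟩
      rintro w (⟨h, rfl⟩ | ⟨h, hw⟩)
      · exact absurd h hv
      · have : (⟨w, h⟩ : A) = x := hfinj (by rw [hw, hx])
        rw [← this]

end Helpers

/-- In a brace, every shore `X` of a cut of matching porosity 2 with
`4 ≤ |X| ≤ |V(G)| - 4` is imbalanced by exactly 2. -/
theorem brace_balance_two {V : Type*} [Finite V] (G : SimpleGraph V)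
    (A B : Set V) (hBrace : IsBraceWith G A B) (X : Set V)
    (hmp : matchingPorosity G X = 2)
    (hlow : 4 ≤ X.ncard) (hhigh : X.ncard ≤ Nat.card V - 4) :
    |((X ∩ A).ncard : ℤ) - ((X ∩ B).ncard : ℤ)| = 2 := by
  classical
  obtain ⟨⟨hconn, hmc⟩, ⟨hun, hdis, hadj⟩, hnt⟩ := id hBrace
  have hXc : X.ncard + Xᶜ.ncard = Nat.card V := Set.ncard_add_ncard_compl X
  have hV8 : 8 ≤ Nat.card V := by omega
  have hXc4 : 4 ≤ Xᶜ.ncard := by omega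
  unfold matchingPorosity at hmp
  have hbdd : BddAbove {n | ∃ M : G.Subgraph, M.IsPerfectMatching ∧
      n = (M.edgeSet ∩ cutEdges G X).ncard} := by
    refine ⟨Nat.card (Sym2 V), ?_⟩
    rintro n ⟨M, hM, rfl⟩
    calc (M.edgeSet ∩ cutEdges G X).ncard
        ≤ (Set.univ : Set (Sym2 V)).ncard :=
          Set.ncard_le_ncard (Set.subset_univ _) (Set.toFinite _)
      _ = Nat.card (Sym2 V) := Set.ncard_univ _
  have hub : ∀ (M : G.Subgraph), M.IsPerfectMatching →
      (M.edgeSet ∩ cutEdges G X).ncard ≤ 2 := by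
    intro M hM
    have hmem : (M.edgeSet ∩ cutEdges G X).ncard ∈ {n | ∃ M : G.Subgraph,
        M.IsPerfectMatching ∧ n = (M.edgeSet ∩ cutEdges G X).ncard} := ⟨M, hM, rfl⟩
    have := le_csSup hbdd hmem
    rwa [hmp] at this
  -- a perfect matching with exactly two crossing edges
  have hexM : ∃ M : G.Subgraph, M.IsPerfectMatching := by
    obtain ⟨x, hxX, y, hyX, hxy⟩ := (Set.one_lt_ncard (Set.toFinite X)).1 (by omega)
    obtain ⟨u, v, huv, _, _⟩ := connected_exists_boundary hconn
      ⟨x, Set.mem_singleton x⟩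
      (fun h => hxy (by
        have := h ▸ Set.mem_univ y
        exact (Set.mem_singleton_iff.1 (h ▸ Set.mem_univ x)).trans
          (Set.mem_singleton_iff.1 (h ▸ Set.mem_univ y)).symm))
    obtain ⟨M, hM, _⟩ := hmc s(u, v) huv
    exact ⟨M, hM⟩
  obtain ⟨M0, hM0⟩ := hexM
  have h2mem : 2 ∈ {n | ∃ M : G.Subgraph, M.IsPerfectMatching ∧
      n = (M.edgeSet ∩ cutEdges G X).ncard} := by
    rw [← hmp]
    exact Nat.sSup_mem ⟨_, M0, hM0, rfl⟩ hbdd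
  obtain ⟨M₂, hM₂, hM₂cross⟩ := h2mem
  obtain ⟨OA, OB, hsum, hdiff, _⟩ := key_counts ⟨hun, hdis, hadj⟩ hM₂ X
  rw [← hM₂cross] at hsum
  have hcases : OA.ncard = 0 ∧ OB.ncard = 2 ∨ OA.ncard = 1 ∧ OB.ncard = 1 ∨
      OA.ncard = 2 ∧ OB.ncard = 0 := by omega
  rcases hcases with ⟨h1, h2⟩ | ⟨h1, h2⟩ | ⟨h1, h2⟩
  · rw [hdiff, h1, h2]; norm_num
  · -- balanced case: contradiction
    exfalso
    rw [h1, h2] at hdiff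
    have hk : (X ∩ A).ncard = (X ∩ B).ncard := by
      have : ((X ∩ A).ncard : ℤ) = (X ∩ B).ncard := by linarith
      exact_mod_cast this
    have hABcard : A.ncard = B.ncard := colour_ncard_eq ⟨hun, hdis, hadj⟩ hM₂
    have hXAB : (X ∩ A) ∪ (X ∩ B) = X := by
      rw [← Set.inter_union_distrib_left, hun, Set.inter_univ]
    have hdisXA : Disjoint (X ∩ A) (X ∩ B) :=
      Set.disjoint_of_subset Set.inter_subset_right Set.inter_subset_right hdis
    have hXsplit : (X ∩ A).ncard + (X ∩ B).ncard = X.ncard := by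
      rw [← Set.ncard_union_eq hdisXA, hXAB]
    have hAsplit : (X ∩ A).ncard + (Xᶜ ∩ A).ncard = A.ncard := by
      have h : (X ∩ A) ∪ (Xᶜ ∩ A) = A := by
        rw [← Set.union_inter_distrib_right, Set.union_compl_self, Set.univ_inter]
      have hd : Disjoint (X ∩ A) (Xᶜ ∩ A) :=
        Set.disjoint_of_subset Set.inter_subset_left Set.inter_subset_left
          disjoint_compl_right
      rw [← Set.ncard_union_eq hd, h]
    have hBsplit : (X ∩ B).ncard + (Xᶜ ∩ B).ncard = B.ncard := by
      have h : (X ∩ B) ∪ (Xᶜ ∩ B) = B := by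
        rw [← Set.union_inter_distrib_right, Set.union_compl_self, Set.univ_inter]
      have hd : Disjoint (X ∩ B) (Xᶜ ∩ B) :=
        Set.disjoint_of_subset Set.inter_subset_left Set.inter_subset_left
          disjoint_compl_right
      rw [← Set.ncard_union_eq hd, h]
    have hXcsplit : (Xᶜ ∩ A).ncard + (Xᶜ ∩ B).ncard = Xᶜ.ncard := by
      have h : (Xᶜ ∩ A) ∪ (Xᶜ ∩ B) = Xᶜ := by
        rw [← Set.inter_union_distrib_left, hun, Set.inter_univ]
      have hd : Disjoint (Xᶜ ∩ A) (Xᶜ ∩ B) :=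
        Set.disjoint_of_subset Set.inter_subset_right Set.inter_subset_right hdis
      rw [← Set.ncard_union_eq hd, h]
    -- numerics
    have hk2 : 2 ≤ (X ∩ A).ncard := by omega
    have hm2' : (Xᶜ ∩ A).ncard = (Xᶜ ∩ B).ncard := by omega
    have hm2 : 2 ≤ (Xᶜ ∩ A).ncard := by omega
    -- expansion applied to X ∩ A
    have hexp1 := brace_expansion hBrace (Set.inter_subset_right : X ∩ A ⊆ A)
      (Set.nonempty_of_ncard_ne_zero (by omega))
      (by omega)
    set N1 := {v | ∃ a ∈ X ∩ A, G.Adj a v} with hN1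
    have hN1B : N1 ⊆ B := by
      rintro v ⟨a, ⟨_, haA⟩, hav⟩
      rcases hadj hav with ⟨_, h⟩ | ⟨h, _⟩
      · exact h
      · exact absurd haA (Set.disjoint_right.1 hdis h)
    have hsplitN1 := Set.ncard_inter_add_ncard_diff_eq_ncard N1 X (Set.toFinite _)
    have hN1Xsub : N1 ∩ X ⊆ X ∩ B := fun v ⟨h1', h2'⟩ => ⟨h2', hN1B h1'⟩
    have hN1Xcard := Set.ncard_le_ncard hN1Xsub (Set.toFinite _)
    obtain ⟨b1', hb1'mem, b2', hb2'mem, hbne⟩ :=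
      (Set.one_lt_ncard (Set.toFinite (N1 \ X))).1 (by omega)
    obtain ⟨⟨p1, hp1XA, hp1adj⟩, hb1'X⟩ := hb1'mem
    obtain ⟨⟨p2, hp2XA, hp2adj⟩, hb2'X⟩ := hb2'mem
    have hb1'B : b1' ∈ B := hN1B ⟨p1, hp1XA, hp1adj⟩
    have hb2'B : b2' ∈ B := hN1B ⟨p2, hp2XA, hp2adj⟩
    -- expansion applied to Xᶜ ∩ B
    have hexp2 := brace_expansion (brace_symm hBrace)
      (Set.inter_subset_right : Xᶜ ∩ B ⊆ B)
      (Set.nonempty_of_ncard_ne_zero (by omega))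
      (by omega)
    set N2 := {v | ∃ a ∈ Xᶜ ∩ B, G.Adj a v} with hN2
    have hN2A : N2 ⊆ A := by
      rintro v ⟨a, ⟨_, haB⟩, hav⟩
      rcases hadj hav with ⟨h, _⟩ | ⟨_, h⟩
      · exact absurd haB (Set.disjoint_left.1 hdis h)
      · exact h
    have hsplitN2 := Set.ncard_inter_add_ncard_diff_eq_ncard N2 Xᶜ (Set.toFinite _)
    have hN2Xsub : N2 ∩ Xᶜ ⊆ Xᶜ ∩ A := fun v ⟨h1', h2'⟩ => ⟨h2', hN2A h1'⟩
    have hN2Xcard := Set.ncard_le_ncard hN2Xsub (Set.toFinite _)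
    obtain ⟨a1', ha1'mem, a2', ha2'mem, hane⟩ :=
      (Set.one_lt_ncard (Set.toFinite (N2 \ Xᶜ))).1 (by omega)
    obtain ⟨⟨q1, hq1XB, hq1adj⟩, ha1'X⟩ := ha1'mem
    obtain ⟨⟨q2, hq2XB, hq2adj⟩, ha2'X⟩ := ha2'mem
    have ha1'XA : a1' ∈ X ∩ A :=
      ⟨Set.notMem_compl_iff.1 ha1'X, hN2A ⟨q1, hq1XB, hq1adj⟩⟩
    have ha2'XA : a2' ∈ X ∩ A :=
      ⟨Set.notMem_compl_iff.1 ha2'X, hN2A ⟨q2, hq2XB, hq2adj⟩⟩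
    -- produce two vertex-disjoint crossing edges
    obtain ⟨p, q, r, w, hpXA, hrXA, hqB, hwB, hqX, hwX, hpr, hqw, hpq, hrw⟩ :
        ∃ p q r w, p ∈ X ∩ A ∧ r ∈ X ∩ A ∧ q ∈ B ∧ w ∈ B ∧ q ∉ X ∧ w ∉ X ∧
          p ≠ r ∧ q ≠ w ∧ G.Adj p q ∧ G.Adj r w := by
      by_cases hc : p1 = p2
      · -- common X-endpoint p1; use one of a1', a2' different from p1
        obtain ⟨c, d, hcXA, hdXB, hcd, hcp⟩ :
            ∃ c d, c ∈ X ∩ A ∧ d ∈ Xᶜ ∩ B ∧ G.Adj c d ∧ c ≠ p1 := by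
          by_cases h : a1' = p1
          · exact ⟨a2', q2, ha2'XA, hq2XB, hq2adj.symm, fun hh => hane (h.trans hh.symm)⟩
          · exact ⟨a1', q1, ha1'XA, hq1XB, hq1adj.symm, h⟩
        by_cases hd : d = b1'
        · exact ⟨p1, b2', c, d, hp1XA, hcXA, hb2'B, hdXB.2, hb2'X,
            fun hh => hdXB.1 hh, fun hh => hcp hh.symm, fun hh => hbne (hd ▸ hh).symm,
            hc ▸ hp2adj, hcd⟩
        · exact ⟨p1, b1', c, d, hp1XA, hcXA, hb1'B, hdXB.2, hb1'X,
            fun hh => hdXB.1 hh, fun hh => hcp hh.symm, fun hh => hd hh.symm,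
            hp1adj, hcd⟩
      · exact ⟨p1, b1', p2, b2', hp1XA, hp2XA, hb1'B, hb2'B, hb1'X, hb2'X,
          hc, hbne, hp1adj, hp2adj⟩
    obtain ⟨M, hM, hMpq, hMrw⟩ := two_extend hBrace hpXA.2 hrXA.2 hqB hwB hpr hqw hpq hrw
    obtain ⟨OA', OB', hsum', hdiff', hmem'⟩ := key_counts ⟨hun, hdis, hadj⟩ hM X
    have hp : p ∈ OA' := hmem' p q hpXA hqX hMpq
    have hr : r ∈ OA' := hmem' r w hrXA hwX hMrw
    have h2OA : 2 ≤ OA'.ncard := by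
      have hsub : ({p, r} : Set V) ⊆ OA' := by
        rintro x (rfl | rfl)
        exacts [hp, hr]
      have := Set.ncard_le_ncard hsub (Set.toFinite _)
      rw [Set.ncard_pair hpr] at this
      exact this
    have hle := hub M hM
    rw [hsum'] at hle
    have hOeq : OA'.ncard = OB'.ncard := by
      rw [hk] at hdiff'
      have : (OA'.ncard : ℤ) = OB'.ncard := by linarith
      exact_mod_cast this
    omega
  · rw [hdiff, h1, h2]; norm_num
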